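/- Lasserre–Avrachenkov integration formula for a quadratic form over a triangle: if H : ℝ² × ℝ² → ℝ is a symmetric bilinear form and T is a triangle in ℝ² with vertices v₀, v₁, v₂, then ∫_T H(x, x) dx = (Area(T)/6) · (H(v₀,v₀) + H(v₁,v₁) + H(v₂,v₂) + H(v₀,v₁) + H(v₀,v₂) + H(v₁,v₂)). -/

import Mathlib

open MeasureTheory

/-! ### Auxiliary: integrals of polynomials over the standard triangle in `ℝ × ℝ` -/

private lemma cubIntegralAux (a b c d u : ℝ) :
    ∫ x in (0:ℝ)..u, (a + b*x + c*x^2 + d*x^3) = a*u + b*u^2/2 + c*u^3/3 + d*u^4/4 := by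
  have h : ∀ x ∈ Set.uIcc (0:ℝ) u,
      HasDerivAt (fun y : ℝ => a*y + b*y^2/2 + c*y^3/3 + d*y^4/4) (a + b*x + c*x^2 + d*x^3) x := by
    intro x _
    have h1 : HasDerivAt (fun y : ℝ => a*y + b*y^2/2 + c*y^3/3 + d*y^4/4)
        (a*1 + b*(2*x^1)/2 + c*(3*x^2)/3 + d*(4*x^3)/4) x :=
      ((((hasDerivAt_id x).const_mul a).add
        (((hasDerivAt_pow 2 x).const_mul b).div_const 2)).add
        (((hasDerivAt_pow 3 x).const_mul c).div_const 3)).add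
        (((hasDerivAt_pow 4 x).const_mul d).div_const 4)
    convert h1 using 1
    ring
  rw [intervalIntegral.integral_eq_sub_of_hasDerivAt h
    ((Continuous.intervalIntegrable (by continuity) _ _))]
  ring

private def TriAux : Set (ℝ × ℝ) := {p | 0 ≤ p.1 ∧ 0 ≤ p.2 ∧ p.1 + p.2 ≤ 1}

private lemma TriAux_closed : IsClosed TriAux := by
  have : TriAux = {p : ℝ × ℝ | 0 ≤ p.1} ∩ ({p | 0 ≤ p.2} ∩ {p | p.1 + p.2 ≤ 1}) := rfl
  rw [this]
  exact (isClosed_le continuous_const continuous_fst).inter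
    ((isClosed_le continuous_const continuous_snd).inter
      (isClosed_le (continuous_fst.add continuous_snd) continuous_const))

private lemma TriAux_compact : IsCompact TriAux := by
  refine IsCompact.of_isClosed_subset (isCompact_Icc (a := ((0:ℝ),(0:ℝ))) (b := (1,1)))
    TriAux_closed ?_
  rintro ⟨x, y⟩ ⟨h1, h2, h3⟩
  exact ⟨⟨h1, h2⟩, ⟨by dsimp at *; linarith, by dsimp at *; linarith⟩⟩

private lemma triAux_integral (f : ℝ → ℝ → ℝ) (hf : Continuous fun p : ℝ × ℝ => f p.1 p.2) :
    ∫ p in TriAux, f p.1 p.2 = ∫ s in (0:ℝ)..1, ∫ t in (0:ℝ)..(1-s), f s t := by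
  have hTm : MeasurableSet TriAux := TriAux_closed.measurableSet
  have hi : IntegrableOn (fun p : ℝ × ℝ => f p.1 p.2) TriAux :=
    hf.continuousOn.integrableOn_compact TriAux_compact
  have hind : Integrable (TriAux.indicator fun p : ℝ × ℝ => f p.1 p.2) :=
    (integrable_indicator_iff hTm).2 hi
  rw [← integral_indicator hTm]
  rw [show (volume : Measure (ℝ × ℝ)) = (volume : Measure ℝ).prod volume from rfl]
  rw [MeasureTheory.integral_prod _ (by exact hind)]
  have key : ∀ s : ℝ, (∫ t : ℝ, TriAux.indicator (fun p : ℝ × ℝ => f p.1 p.2) (s, t)) =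
      (Set.Icc (0:ℝ) 1).indicator (fun s => ∫ t in (0:ℝ)..(1-s), f s t) s := by
    intro s
    by_cases hs : 0 ≤ s ∧ s ≤ 1
    · have h1 : (fun t : ℝ => TriAux.indicator (fun p : ℝ × ℝ => f p.1 p.2) (s, t)) =
          (Set.Icc (0:ℝ) (1-s)).indicator (fun t => f s t) := by
        funext t
        simp only [Set.indicator, TriAux, Set.mem_setOf_eq, Set.mem_Icc]
        by_cases ht : 0 ≤ t ∧ t ≤ 1 - s
        · rw [if_pos ⟨hs.1, ht.1, by linarith [ht.2]⟩, if_pos ht]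
        · rw [if_neg, if_neg ht]
          rintro ⟨-, h2, h3⟩
          exact ht ⟨h2, by linarith⟩
      rw [h1, integral_indicator measurableSet_Icc,
        integral_Icc_eq_integral_Ioc, ← intervalIntegral.integral_of_le (by linarith [hs.2]),
        Set.indicator_of_mem (Set.mem_Icc.2 hs)]
    · have h1 : (fun t : ℝ => TriAux.indicator (fun p : ℝ × ℝ => f p.1 p.2) (s, t)) =
          fun _ => 0 := by
        funext t
        refine Set.indicator_of_notMem ?_ _
        rintro ⟨h1, h2, h3⟩
        exact hs ⟨h1, by linarith⟩
      rw [h1, integral_zero, Set.indicator_of_notMem (by simpa [Set.mem_Icc] using hs)]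
  simp_rw [key]
  rw [integral_indicator measurableSet_Icc, integral_Icc_eq_integral_Ioc,
    ← intervalIntegral.integral_of_le (by norm_num : (0:ℝ) ≤ 1)]

private lemma triAux_moment (c0 c1 c2 c3 c4 c5 : ℝ) :
    ∫ p in TriAux, (c0 + c1*p.1 + c2*p.2 + c3*p.1^2 + c4*(p.1*p.2) + c5*p.2^2) =
      c0/2 + c1/6 + c2/6 + c3/12 + c4/24 + c5/12 := by
  rw [triAux_integral (fun s t => c0 + c1*s + c2*t + c3*s^2 + c4*(s*t) + c5*t^2) (by continuity)]
  have inner : ∀ s : ℝ, (∫ t in (0:ℝ)..(1-s), (c0 + c1*s + c2*t + c3*s^2 + c4*(s*t) + c5*t^2)) =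
      (c0 + c2/2 + c5/3) + (c1 - c0 + c4/2 - c2 - c5)*s + (c3 - c1 + c2/2 - c4 + c5)*s^2 +
        (-c3 + c4/2 - c5/3)*s^3 := by
    intro s
    have h := cubIntegralAux (c0 + c1*s + c3*s^2) (c2 + c4*s) c5 0 (1-s)
    have he : ∀ t : ℝ, (c0 + c1*s + c2*t + c3*s^2 + c4*(s*t) + c5*t^2) =
        ((c0 + c1*s + c3*s^2) + (c2 + c4*s)*t + c5*t^2 + 0*t^3) := fun t => by ring
    simp_rw [he]
    rw [h]
    ring
  rw [intervalIntegral.integral_congr (g := fun s =>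
    (c0 + c2/2 + c5/3) + (c1 - c0 + c4/2 - c2 - c5)*s + (c3 - c1 + c2/2 - c4 + c5)*s^2 +
      (-c3 + c4/2 - c5/3)*s^3) (fun s _ => inner s), cubIntegralAux]
  ring

/-! ### The standard simplex in `Fin 2 → ℝ` -/

private def Simp2 : Set (Fin 2 → ℝ) := {p | 0 ≤ p 0 ∧ 0 ≤ p 1 ∧ p 0 + p 1 ≤ 1}

private lemma mem_convexHull_triple {E : Type*} [AddCommGroup E] [Module ℝ E] {a b c x : E}
    (wa wb wc : ℝ) (ha : 0 ≤ wa) (hb : 0 ≤ wb) (hc : 0 ≤ wc) (hsum : wa + wb + wc = 1)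
    (hx : x = wa • a + wb • b + wc • c) : x ∈ convexHull ℝ ({a, b, c} : Set E) := by
  have h := Finset.centerMass_mem_convexHull (s := ({a,b,c} : Set E))
    (t := (Finset.univ : Finset (Fin 3)))
    (w := ![wa, wb, wc]) (z := ![a, b, c]) (by
      intro i _; fin_cases i <;> simpa)
    (by simp [Fin.sum_univ_three, hsum])
    (by intro i _; fin_cases i <;> simp)
  convert h using 1
  rw [Finset.centerMass]
  simp [Fin.sum_univ_three, hsum, hx]

private lemma Simp2_eq :
    convexHull ℝ ({(0 : Fin 2 → ℝ), ![1,0], ![0,1]} : Set (Fin 2 → ℝ)) = Simp2 := by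
  apply le_antisymm
  · apply convexHull_min
    · rintro x (rfl | rfl | rfl) <;> simp [Simp2]
    · have h0 : Convex ℝ {p : Fin 2 → ℝ | 0 ≤ p 0} :=
        convex_halfSpace_ge ⟨fun a b => rfl, fun c a => rfl⟩ 0
      have h1 : Convex ℝ {p : Fin 2 → ℝ | 0 ≤ p 1} :=
        convex_halfSpace_ge ⟨fun a b => rfl, fun c a => rfl⟩ 0
      have h2 : Convex ℝ {p : Fin 2 → ℝ | p 0 + p 1 ≤ 1} :=
        convex_halfSpace_le ⟨fun a b => by simp; ring, fun c a => by simp; ring⟩ 1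
      exact (h0.inter (h1.inter h2))
  · rintro p ⟨h0, h1, h2⟩
    refine mem_convexHull_triple (1 - p 0 - p 1) (p 0) (p 1) (by linarith) h0 h1 (by ring) ?_
    funext i
    fin_cases i <;> simp

private lemma Simp2_measurable : MeasurableSet Simp2 := by
  have : Simp2 = {p : Fin 2 → ℝ | 0 ≤ p 0} ∩ ({p | 0 ≤ p 1} ∩ {p | p 0 + p 1 ≤ 1}) := rfl
  rw [this]
  exact (measurableSet_le measurable_const (measurable_pi_apply 0)).inter
    ((measurableSet_le measurable_const (measurable_pi_apply 1)).inter
      (measurableSet_le ((measurable_pi_apply 0).add (measurable_pi_apply 1)) measurable_const))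

private lemma simp2_transfer (g : (Fin 2 → ℝ) → ℝ) :
    ∫ p in Simp2, g p = ∫ q in TriAux, g ![q.1, q.2] := by
  have hmp := volume_preserving_finTwoArrow ℝ
  have hemb : MeasurableEmbedding (MeasurableEquiv.finTwoArrow : (Fin 2 → ℝ) ≃ᵐ ℝ × ℝ) :=
    MeasurableEquiv.measurableEmbedding _
  have himg : (MeasurableEquiv.finTwoArrow : (Fin 2 → ℝ) ≃ᵐ ℝ × ℝ) '' Simp2 = TriAux := by
    ext ⟨a, b⟩
    simp only [Set.mem_image, TriAux, Set.mem_setOf_eq]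
    constructor
    · rintro ⟨p, hp, heq⟩
      simp only [MeasurableEquiv.finTwoArrow, MeasurableEquiv.coe_mk, Equiv.coe_fn_mk,
        Prod.mk.injEq] at heq
      obtain ⟨rfl, rfl⟩ := heq
      simpa [Simp2] using hp
    · rintro ⟨h1, h2, h3⟩
      exact ⟨![a, b], by simpa [Simp2] using ⟨h1, h2, h3⟩, by
        simp [MeasurableEquiv.finTwoArrow]⟩
  have := hmp.setIntegral_image_emb hemb (fun q : ℝ × ℝ => g ![q.1, q.2]) Simp2
  rw [himg] at this
  rw [this]
  apply setIntegral_congr_fun Simp2_measurable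
  intro p _
  congr 1
  funext i
  fin_cases i <;> simp [MeasurableEquiv.finTwoArrow]

/-! ### Main theorem -/

theorem stmt9 (H : (Fin 2 → ℝ) → (Fin 2 → ℝ) → ℝ)
    (hsymm : ∀ x y, H x y = H y x)
    (hlin : ∀ y, IsLinearMap ℝ (fun x => H x y))
    (hlin' : ∀ x, IsLinearMap ℝ (fun y => H x y))
    (v₀ v₁ v₂ : Fin 2 → ℝ) :
    ∫ x in convexHull ℝ {v₀, v₁, v₂}, H x x =
      (|(v₁ 0 - v₀ 0) * (v₂ 1 - v₀ 1) - (v₁ 1 - v₀ 1) * (v₂ 0 - v₀ 0)| / 2) / 6 *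
        (H v₀ v₀ + H v₁ v₁ + H v₂ v₂ + H v₀ v₁ + H v₀ v₂ + H v₁ v₂) := by
  -- bilinearity helper lemmas
  have haddl : ∀ a b y, H (a + b) y = H a y + H b y := fun a b y => (hlin y).map_add a b
  have haddr : ∀ x a b, H x (a + b) = H x a + H x b := fun x a b => (hlin' x).map_add a b
  have hsmull : ∀ (c : ℝ) a y, H (c • a) y = c * H a y := fun c a y => (hlin y).map_smul c a
  have hsmulr : ∀ x (c : ℝ) a, H x (c • a) = c * H x a := fun x c a => (hlin' x).map_smul c a
  have hsubl : ∀ a b y, H (a - b) y = H a y - H b y := fun a b y => by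
    rw [sub_eq_add_neg, haddl, show -b = (-1:ℝ) • b by simp, hsmull]; ring
  have hsubr : ∀ x a b, H x (a - b) = H x a - H x b := fun x a b => by
    rw [sub_eq_add_neg, haddr, show -b = (-1:ℝ) • b by simp, hsmulr]; ring
  set w₁ : Fin 2 → ℝ := v₁ - v₀ with hw₁
  set w₂ : Fin 2 → ℝ := v₂ - v₀ with hw₂
  set D : ℝ := (v₁ 0 - v₀ 0) * (v₂ 1 - v₀ 1) - (v₁ 1 - v₀ 1) * (v₂ 0 - v₀ 0) with hD
  by_cases hDz : D = 0
  · -- degenerate case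
    have hnull : volume (convexHull ℝ ({v₀, v₁, v₂} : Set (Fin 2 → ℝ))) = 0 := by
      refine measure_mono_null (convexHull_subset_affineSpan _)
        (Measure.addHaar_affineSubspace _ _ ?_)
      intro htop
      have hdir : vectorSpan ℝ ({v₀, v₁, v₂} : Set (Fin 2 → ℝ)) = ⊤ := by
        rw [← direction_affineSpan, htop, AffineSubspace.direction_top]
      set K : Submodule ℝ (Fin 2 → ℝ) := Submodule.span ℝ {w₁, w₂} with hK
      have hle : vectorSpan ℝ ({v₀, v₁, v₂} : Set (Fin 2 → ℝ)) ≤ K := by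
        rw [vectorSpan_def]
        refine Submodule.span_le.2 ?_
        have hm1 : w₁ ∈ K := Submodule.subset_span (by simp)
        have hm2 : w₂ ∈ K := Submodule.subset_span (by simp)
        have hbase : ∀ u ∈ ({v₀, v₁, v₂} : Set (Fin 2 → ℝ)), u - v₀ ∈ K := by
          intro u hu
          rcases hu with h | h | h <;> rw [h]
          · simpa using K.zero_mem
          · exact hm1
          · exact hm2
        rintro x ⟨a, ha, b, hb, rfl⟩
        have h := K.sub_mem (hbase a ha) (hbase b hb)
        rw [sub_sub_sub_cancel_right] at h
        exact h
      have hKtop : K = ⊤ := top_le_iff.1 (hdir ▸ hle)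
      -- every element of K satisfies two linear relations
      have hrel : ∀ x ∈ K, w₁ 1 * x 0 = w₁ 0 * x 1 ∧ w₂ 1 * x 0 = w₂ 0 * x 1 := by
        intro x hx
        have hD' : w₁ 0 * w₂ 1 - w₁ 1 * w₂ 0 = 0 := by
          rw [hw₁, hw₂] at *
          simpa [Pi.sub_apply] using hDz
        refine Submodule.span_induction ?_ (by simp) ?_ ?_ hx
        · rintro y (rfl | rfl)
          · exact ⟨by ring, by linear_combination hD'⟩
          · exact ⟨by linear_combination -hD', by ring⟩
        · rintro y z - - ⟨h1, h2⟩ ⟨h3, h4⟩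
          exact ⟨by simp only [Pi.add_apply]; linear_combination h1 + h3,
            by simp only [Pi.add_apply]; linear_combination h2 + h4⟩
        · rintro c y - ⟨h1, h2⟩
          exact ⟨by simp only [Pi.smul_apply, smul_eq_mul]; linear_combination c * h1,
            by simp only [Pi.smul_apply, smul_eq_mul]; linear_combination c * h2⟩
      have h10 := hrel ![1, 0] (hKtop ▸ Submodule.mem_top)
      have h01 := hrel ![0, 1] (hKtop ▸ Submodule.mem_top)
      simp at h10 h01
      -- w₁ = w₂ = 0
      have hw1z : w₁ = 0 := by
        funext i; fin_cases i
        · simpa using h01.1.symm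
        · simpa using h10.1
      have hw2z : w₂ = 0 := by
        funext i; fin_cases i
        · simpa using h01.2.symm
        · simpa using h10.2
      have : (![1, 0] : Fin 2 → ℝ) ∈ K := hKtop ▸ Submodule.mem_top
      rw [hK, hw1z, hw2z] at this
      simp only [Set.pair_eq_singleton, Submodule.span_zero_singleton,
        Submodule.mem_bot] at this
      have := congrFun this 0
      simp at this
    rw [Measure.restrict_eq_zero.2 hnull]
    rw [show |D| = 0 by rw [hDz, abs_zero]]
    simp
  · -- nondegenerate case
    set M : Matrix (Fin 2) (Fin 2) ℝ := Matrix.of ![![w₁ 0, w₂ 0], ![w₁ 1, w₂ 1]] with hM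
    have hMdet : M.det = D := by
      rw [Matrix.det_fin_two]
      simp [hM, hw₁, hw₂, hD]
      ring
    set A : (Fin 2 → ℝ) →ₗ[ℝ] (Fin 2 → ℝ) := Matrix.toLin' M with hA
    have hAapp : ∀ p : Fin 2 → ℝ, A p = p 0 • w₁ + p 1 • w₂ := by
      intro p
      funext i
      fin_cases i <;>
        simp [hA, hM, Matrix.toLin'_apply, Matrix.mulVec, dotProduct,
          Fin.sum_univ_two, mul_comm]
    have hAinj : Function.Injective A := by
      have : Function.Injective (M.mulVec) :=
        Matrix.mulVec_injective_iff_isUnit.2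
          ((Matrix.isUnit_iff_isUnit_det M).2 (isUnit_iff_ne_zero.2 (hMdet ▸ hDz)))
      rw [hA]; exact this
    set L : (Fin 2 → ℝ) → (Fin 2 → ℝ) := fun p => v₀ + A p with hL
    -- the affine map structure
    have hLaff : ∃ Laff : (Fin 2 → ℝ) →ᵃ[ℝ] (Fin 2 → ℝ), ⇑Laff = L := by
      refine ⟨AffineMap.mk' L A 0 ?_, rfl⟩
      intro p
      simp [hL]
      abel
    obtain ⟨Laff, hLaffc⟩ := hLaff
    have himg : L '' Simp2 = convexHull ℝ ({v₀, v₁, v₂} : Set (Fin 2 → ℝ)) := by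
      rw [← Simp2_eq, ← hLaffc, AffineMap.image_convexHull]
      congr 1
      have e0 : Laff 0 = v₀ := by rw [hLaffc]; simp [hL]
      have e1 : Laff ![1, 0] = v₁ := by
        rw [hLaffc]
        simp only [hL]
        rw [hAapp]
        funext i
        simp [hw₁]
      have e2 : Laff ![0, 1] = v₂ := by
        rw [hLaffc]
        simp only [hL]
        rw [hAapp]
        funext i
        simp [hw₂]
      rw [Set.image_insert_eq, Set.image_insert_eq, Set.image_singleton, e0, e1, e2]
    set Acl : (Fin 2 → ℝ) →L[ℝ] (Fin 2 → ℝ) := LinearMap.toContinuousLinearMap A with hAcl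
    have hdet : Acl.det = D := by
      rw [show Acl.det = LinearMap.det A from rfl, hA, LinearMap.det_toLin', hMdet]
    have hchg := integral_image_eq_integral_abs_det_fderiv_smul volume Simp2_measurable
      (f := L) (f' := fun _ => Acl)
      (fun x _ => (Acl.hasFDerivAt.const_add v₀).hasFDerivWithinAt)
      (fun a _ b _ h => hAinj (by simpa [hL] using h))
      (fun x => H x x)
    rw [← himg, hchg]
    have hexp : ∀ p : Fin 2 → ℝ, H (L p) (L p) =
        H v₀ v₀ + (2 * H v₀ w₁) * p 0 + (2 * H v₀ w₂) * p 1 + (H w₁ w₁) * p 0^2 +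
          (2 * H w₁ w₂) * (p 0 * p 1) + (H w₂ w₂) * p 1^2 := by
      intro p
      simp only [hL, hAapp]
      simp only [haddl, haddr, hsmull, hsmulr]
      rw [hsymm w₁ v₀, hsymm w₂ v₀, hsymm w₂ w₁]
      ring
    calc ∫ x in Simp2, |Acl.det| • H (L x) (L x)
        = |D| * ∫ x in Simp2, H (L x) (L x) := by
          rw [hdet]
          simp_rw [smul_eq_mul]
          rw [integral_const_mul]
      _ = |D| * (H v₀ v₀/2 + (2*H v₀ w₁)/6 + (2*H v₀ w₂)/6 + (H w₁ w₁)/12 +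
            (2*H w₁ w₂)/24 + (H w₂ w₂)/12) := by
          congr 1
          simp_rw [hexp]
          rw [simp2_transfer (fun p => H v₀ v₀ + (2 * H v₀ w₁) * p 0 + (2 * H v₀ w₂) * p 1 +
            (H w₁ w₁) * p 0^2 + (2 * H w₁ w₂) * (p 0 * p 1) + (H w₂ w₂) * p 1^2)]
          simp only [Matrix.cons_val_zero, Matrix.cons_val_one, Matrix.head_cons]
          exact triAux_moment _ _ _ _ _ _
      _ = (|D| / 2) / 6 * (H v₀ v₀ + H v₁ v₁ + H v₂ v₂ + H v₀ v₁ + H v₀ v₂ + H v₁ v₂) := by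
          simp only [hw₁, hw₂, hsubl, hsubr]
          rw [hsymm v₁ v₀, hsymm v₂ v₀]
          ring
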